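/- Let G be a finite group of odd order and let S ⊆ G with S ∩ (−S) = ∅ and |S| = 3, say S = {a, b, c}. Then |Σ(S)| ≥ 6, where Σ(S) is the set of all sums over nonempty subsets of S in any order. -/

import Mathlib

open Pointwise

/-- The set of all sums over nonempty subsets of `S`, with elements summed in some order. -/
def sumset {G : Type*} [AddGroup G] (S : Finset G) : Set G :=
  {g | ∃ l : List G, l.Nodup ∧ l ≠ [] ∧ (∀ x ∈ l, x ∈ S) ∧ l.sum = g}

section Aux

variable {G : Type*} [AddGroup G] [Fintype G]

/-- Doubling is injective in a group of odd order. -/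
lemma dbl_inj (hodd : Odd (Fintype.card G)) {u v : G} (h : u + u = v + v) : u = v := by
  obtain ⟨m, hm⟩ := hodd
  have key : ∀ w : G, (m + 1) • (w + w) = w := by
    intro w
    have hc : (Fintype.card G) • w = 0 := card_nsmul_eq_zero
    calc (m + 1) • (w + w) = (m + 1) • (2 • w) := by rw [two_nsmul]
      _ = (2 * (m + 1)) • w := (mul_nsmul w 2 (m + 1)).symm
      _ = (Fintype.card G + 1) • w := by
          have h2 : 2 * (m + 1) = Fintype.card G + 1 := by omega
          rw [h2]
      _ = (Fintype.card G) • w + w := by rw [add_nsmul, one_nsmul]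
      _ = w := by rw [hc, zero_add]
  calc u = (m + 1) • (u + u) := (key u).symm
    _ = (m + 1) • (v + v) := by rw [h]
    _ = v := key v

/-- In a group of odd order, `u = v + u + v` forces `v = 0`. -/
lemma sandwich_eq (hodd : Odd (Fintype.card G)) {u v : G} (h : u = v + u + v) : v = 0 := by
  have h2 : (u + v) + (u + v) = u + u := by
    calc (u + v) + (u + v) = u + (v + u + v) := by simp [add_assoc]
      _ = u + u := by rw [← h]
  have := dbl_inj hodd h2
  have : v = 0 := by
    have h3 : u + v = u + 0 := by rw [add_zero]; exact this
    exact add_left_cancel h3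
  exact this

variable [DecidableEq G]

lemma mem_sumset_single {S : Finset G} {x : G} (hx : x ∈ S) : x ∈ sumset S :=
  ⟨[x], by simp, by simp, by simpa using hx, by simp⟩

lemma mem_sumset_pair {S : Finset G} {x y : G} (hx : x ∈ S) (hy : y ∈ S) (hxy : x ≠ y) :
    x + y ∈ sumset S :=
  ⟨[x, y], by simp [hxy], by simp, by simp [hx, hy], by simp⟩

lemma mem_sumset_triple {S : Finset G} {x y z : G} (hx : x ∈ S) (hy : y ∈ S) (hz : z ∈ S)
    (hxy : x ≠ y) (hxz : x ≠ z) (hyz : y ≠ z) : x + (y + z) ∈ sumset S :=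
  ⟨[x, y, z], by simp [hxy, hxz, hyz], by simp, by simp [hx, hy, hz], by simp⟩

lemma six_le_ncard {T : Set G} {a b c d e f : G}
    (ha : a ∈ T) (hb : b ∈ T) (hc : c ∈ T) (hd : d ∈ T) (he : e ∈ T) (hf : f ∈ T)
    (h1 : a ≠ b) (h2 : a ≠ c) (h3 : a ≠ d) (h4 : a ≠ e) (h5 : a ≠ f)
    (h6 : b ≠ c) (h7 : b ≠ d) (h8 : b ≠ e) (h9 : b ≠ f)
    (h10 : c ≠ d) (h11 : c ≠ e) (h12 : c ≠ f)
    (h13 : d ≠ e) (h14 : d ≠ f) (h15 : e ≠ f) : 6 ≤ T.ncard := by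
  have hsub : (({a, b, c, d, e, f} : Finset G) : Set G) ⊆ T := by
    intro g hg
    simp only [Finset.coe_insert, Finset.coe_singleton, Set.mem_insert_iff,
      Set.mem_singleton_iff] at hg
    rcases hg with rfl | rfl | rfl | rfl | rfl | rfl <;> assumption
  have hcard : ({a, b, c, d, e, f} : Finset G).card = 6 := by
    rw [Finset.card_insert_of_notMem (by simp [h1, h2, h3, h4, h5]),
      Finset.card_insert_of_notMem (by simp [h6, h7, h8, h9]),
      Finset.card_insert_of_notMem (by simp [h10, h11, h12]),
      Finset.card_insert_of_notMem (by simp [h13, h14]),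
      Finset.card_insert_of_notMem (by simp [h15]),
      Finset.card_singleton]
  calc (6 : ℕ) = (({a, b, c, d, e, f} : Finset G) : Set G).ncard := by
        rw [Set.ncard_coe_finset, hcard]
    _ ≤ T.ncard := Set.ncard_le_ncard hsub (Set.toFinite T)

/-- The main construction for a chosen ordering `(x, y, z)` of the three elements,
assuming `x + y ≠ z` and `x + z ≠ y`. -/
lemma main_perm (hodd : Odd (Fintype.card G)) {S : Finset G} {x y z : G}
    (hx : x ∈ S) (hy : y ∈ S) (hz : z ∈ S)
    (hxy : x ≠ y) (hxz : x ≠ z) (hyz : y ≠ z)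
    (hN : ∀ u ∈ S, ∀ v ∈ S, u + v ≠ 0)
    (P1 : x + y ≠ z) (P2 : x + z ≠ y) : 6 ≤ (sumset S).ncard := by
  have hx0 : x ≠ 0 := fun h => hN x hx x hx (by rw [h, add_zero])
  have hy0 : y ≠ 0 := fun h => hN y hy y hy (by rw [h, add_zero])
  have hz0 : z ≠ 0 := fun h => hN z hz z hz (by rw [h, add_zero])
  have m1 := mem_sumset_single hx
  have m2 := mem_sumset_single hy
  have m3 := mem_sumset_single hz
  have m4 := mem_sumset_pair hx hy hxy
  have m5 := mem_sumset_pair hx hz hxz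
  -- common distinctness facts
  have d3 : x ≠ x + y := fun h => hy0 (by rwa [left_eq_add] at h)
  have d4 : x ≠ x + z := fun h => hz0 (by rwa [left_eq_add] at h)
  have d7 : y ≠ x + y := fun h => hx0 (by rwa [right_eq_add] at h)
  have d8 : y ≠ x + z := fun h => P2 h.symm
  have d10 : z ≠ x + y := fun h => P1 h.symm
  have d11 : z ≠ x + z := fun h => hx0 (by rwa [right_eq_add] at h)
  have d13 : x + y ≠ x + z := fun h => hyz (add_left_cancel h)
  by_cases hT : x + (y + z) = y
  · -- sixth element: y + z
    have m6 := mem_sumset_pair hy hz hyz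
    have d5 : x ≠ y + z := by
      intro h
      -- from hT : x + (y+z) = y and y + z = x : x + x = y
      have hxx : x + x = y := by nth_rewrite 2 [h]; exact hT
      have : x + z = 0 := by
        have h' : x + (x + z) = x := by
          rw [← add_assoc, hxx, ← h]
        have := add_left_cancel (h'.trans (add_zero x).symm)
        exact this
      exact hN x hx z hz this
    have d9 : y ≠ y + z := fun h => hz0 (by rwa [left_eq_add] at h)
    have d12 : z ≠ y + z := fun h => hy0 (by rwa [right_eq_add] at h)
    have d14 : x + y ≠ y + z := by
      intro h
      have h' : (y + z) + z = y := by rw [← h, add_assoc]; exact hT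
      have : z + z = 0 := by
        have := h'
        rw [add_assoc] at this
        rwa [eq_comm, left_eq_add] at this
      exact hN z hz z hz this
    have d15 : x + z ≠ y + z := fun h => hxy (add_right_cancel h)
    exact six_le_ncard m1 m2 m3 m4 m5 m6 hxy hxz d3 d4 d5 hyz d7 d8 d9 d10 d11 d12 d13 d14 d15
  · -- sixth element: x + (y + z)
    have m6 := mem_sumset_triple hx hy hz hxy hxz hyz
    have d5 : x ≠ x + (y + z) := fun h =>
      hN y hy z hz (by rwa [left_eq_add] at h)
    have d9 : y ≠ x + (y + z) := fun h => hT h.symm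
    have d12 : z ≠ x + (y + z) := by
      intro h
      rw [← add_assoc] at h
      exact hN x hx y hy (by rwa [right_eq_add] at h)
    have d14 : x + y ≠ x + (y + z) := by
      intro h
      have := add_left_cancel h
      exact hz0 (by rwa [left_eq_add] at this)
    have d15 : x + z ≠ x + (y + z) := by
      intro h
      have := add_left_cancel h
      exact hy0 (by rwa [right_eq_add] at this)
    exact six_le_ncard m1 m2 m3 m4 m5 m6 hxy hxz d3 d4 d5 hyz d7 d8 d9 d10 d11 d12 d13 d14 d15

end Aux

theorem stmt_4 {G : Type*} [AddGroup G] [Fintype G] [DecidableEq G]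
    (hodd : Odd (Fintype.card G)) (S : Finset G)
    (hdisj : Disjoint S (-S)) (hcard : S.card = 3) :
    6 ≤ (sumset S).ncard := by
  obtain ⟨a, b, c, hab, hac, hbc, rfl⟩ := Finset.card_eq_three.mp hcard
  set S : Finset G := {a, b, c} with hS
  have ha : a ∈ S := by simp [hS]
  have hb : b ∈ S := by simp [hS]
  have hc : c ∈ S := by simp [hS]
  have hN : ∀ u ∈ S, ∀ v ∈ S, u + v ≠ 0 := by
    intro u hu v hv h
    have hv' : v = -u := by
      rw [eq_neg_of_add_eq_zero_right h]
    have : v ∈ -S := hv' ▸ Finset.neg_mem_neg hu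
    exact (Finset.disjoint_left.mp hdisj hv) this
  have ha0 : a ≠ 0 := fun h => hN a ha a ha (by rw [h, add_zero])
  have hb0 : b ≠ 0 := fun h => hN b hb b hb (by rw [h, add_zero])
  have hc0 : c ≠ 0 := fun h => hN c hc c hc (by rw [h, add_zero])
  by_cases hA : a + b ≠ c ∧ a + c ≠ b
  · exact main_perm hodd ha hb hc hab hac hbc hN hA.1 hA.2
  by_cases hB : b + a ≠ c ∧ b + c ≠ a
  · exact main_perm hodd hb ha hc (Ne.symm hab) hbc hac hN hB.1 hB.2
  by_cases hC : c + a ≠ b ∧ c + b ≠ a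
  · exact main_perm hodd hc ha hb (Ne.symm hac) (Ne.symm hbc) hab hN hC.1 hC.2
  · exfalso
    have hA' : a + b = c ∨ a + c = b := by
      rcases not_and_or.mp hA with h | h
      · exact Or.inl (not_ne_iff.mp h)
      · exact Or.inr (not_ne_iff.mp h)
    have hB' : b + a = c ∨ b + c = a := by
      rcases not_and_or.mp hB with h | h
      · exact Or.inl (not_ne_iff.mp h)
      · exact Or.inr (not_ne_iff.mp h)
    have hC' : c + a = b ∨ c + b = a := by
      rcases not_and_or.mp hC with h | h
      · exact Or.inl (not_ne_iff.mp h)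
      · exact Or.inr (not_ne_iff.mp h)
    rcases hA' with h1 | h1
    · rcases hB' with h2 | h2
      · rcases hC' with h3 | h3
        · -- a+b=c, c+a=b : b = a + b + a
          rw [← h1] at h3
          exact ha0 (sandwich_eq hodd h3.symm)
        · -- a+b=c, c+b=a : a = a + b + b
          rw [← h1, add_assoc] at h3
          exact hN b hb b hb (by rwa [eq_comm, left_eq_add] at h3)
      · -- a+b=c, b+c=a : a = b + a + b
        rw [← h1, ← add_assoc] at h2
        exact hb0 (sandwich_eq hodd h2.symm)
    · rcases hB' with h2 | h2
      · -- a+c=b, b+a=c : c = a + c + a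
        rw [← h1] at h2
        exact ha0 (sandwich_eq hodd h2.symm)
      · -- a+c=b, b+c=a : a = a + c + c
        rw [← h1, add_assoc] at h2
        exact hN c hc c hc (by rwa [eq_comm, left_eq_add] at h2)
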